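/- Let X : ℝ × ℝ^d → ℝ^d be C¹ (jointly), a one-parameter family of vector fields X_t = X(t, ·), and let φ : ℝ × ℝ × ℝ^d → ℝ^d be C² (jointly) with φ(t, 0, p) = p and ∂_s φ(t, s, p) = X(t, φ(t, s, p)) for all (t, s, p), so that for each t the map s ↦ φ(t, s, ·) is the flow of X_t. Write φ_s = φ(0, s, ·) for the flow of X₀, and X′(p) = ∂_t X(t, p)|_{t=0}. Then for every p ∈ ℝ^d, the derivative at t = 0 of the family of time-one maps pre-composed with φ_{−1} is given by ∂_t [φ(t, 1, φ_{−1}(p))]|_{t=0} = ∫₀¹ Dφ_{1−s}(φ_{s−1}(p)) (X′(φ_{s−1}(p))) ds, where Dφ_u(q) denotes the spatial derivative of φ_u at q. (Equivalently, the vector field tangent to the family of diffeomorphisms h_t = φ^{X_t}_1 ∘ φ_{−1} at t = 0 is ∫₀¹ (φ_s)_* X′ ds.) -/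

import Mathlib

open Set

namespace Stmt17Aux

/-- Forward-in-time uniqueness (zero solution) for a linear ODE. -/
private lemma linear_ode_zero_fwd {E : Type*} [NormedAddCommGroup E] [NormedSpace ℝ E]
    (M : ℝ → E →L[ℝ] E) (hM : Continuous M) (e : ℝ → E)
    (he : ∀ t, HasDerivAt e (M t (e t)) t) (h0 : e 0 = 0) {T : ℝ} (hT : 0 ≤ T) :
    e T = 0 := by
  obtain ⟨C, hC⟩ := (isCompact_Icc (a := (0:ℝ)) (b := T)).exists_bound_of_continuousOn
    hM.continuousOn
  have key := norm_le_gronwallBound_of_norm_deriv_right_le (f := e)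
    (f' := fun t => M t (e t)) (δ := 0) (K := C) (ε := 0) (a := 0) (b := T)
    (fun t _ => (he t).continuousAt.continuousWithinAt)
    (fun t _ => (he t).hasDerivWithinAt)
    (by simp [h0])
    (fun t ht => by
      calc ‖M t (e t)‖ ≤ ‖M t‖ * ‖e t‖ := (M t).le_opNorm _
        _ ≤ C * ‖e t‖ + 0 := by
            rw [add_zero]
            exact mul_le_mul_of_nonneg_right (hC t ⟨ht.1, ht.2.le⟩) (norm_nonneg _))
  have h := key T ⟨hT, le_rfl⟩
  rw [gronwallBound_ε0_δ0] at h
  simpa using le_antisymm h (norm_nonneg _)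

/-- Global uniqueness (zero solution) for a linear ODE with continuous coefficients. -/
private lemma linear_ode_zero {E : Type*} [NormedAddCommGroup E] [NormedSpace ℝ E]
    (M : ℝ → E →L[ℝ] E) (hM : Continuous M) (e : ℝ → E)
    (he : ∀ t, HasDerivAt e (M t (e t)) t) (h0 : e 0 = 0) (t : ℝ) : e t = 0 := by
  rcases le_total 0 t with h | h
  · exact linear_ode_zero_fwd M hM e he h0 h
  · have hrev : ∀ u : ℝ, HasDerivAt (fun u' => e (-u'))
        ((-(M (-u))) ((fun u' => e (-u')) u)) u := by
      intro u
      have h1 := (he (-u)).scomp u (hasDerivAt_neg u)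
      simpa [Function.comp_def] using h1
    have := linear_ode_zero_fwd (fun u => -(M (-u)))
      (by exact (hM.comp continuous_neg).neg) (fun u => e (-u)) hrev (by simpa using h0)
      (T := -t) (by linarith)
    simpa using this


variable {d : ℕ}

/-- The time-zero flow, as a map of (time, point) jointly. -/
private def Afl (φ : ℝ → ℝ → (Fin d → ℝ) → Fin d → ℝ) : ℝ × (Fin d → ℝ) → Fin d → ℝ :=
  fun z => φ 0 z.1 z.2

/-- Spatial derivative of the time-zero flow. -/
private noncomputable def D2 (φ : ℝ → ℝ → (Fin d → ℝ) → Fin d → ℝ) (u : ℝ) (x : Fin d → ℝ) :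
    (Fin d → ℝ) →L[ℝ] (Fin d → ℝ) :=
  (fderiv ℝ (Afl φ) (u, x)).comp (ContinuousLinearMap.inr ℝ ℝ (Fin d → ℝ))

private lemma D2_apply (φ : ℝ → ℝ → (Fin d → ℝ) → Fin d → ℝ) (u : ℝ) (x v : Fin d → ℝ) :
    D2 φ u x v = fderiv ℝ (Afl φ) (u, x) ((0:ℝ), v) := by
  simp [D2]

variable {φ : ℝ → ℝ → (Fin d → ℝ) → Fin d → ℝ} {X : ℝ → (Fin d → ℝ) → Fin d → ℝ}

private lemma hAfl (hφ : ContDiff ℝ 2 (fun q : ℝ × ℝ × (Fin d → ℝ) => φ q.1 q.2.1 q.2.2)) :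
    ContDiff ℝ 2 (Afl φ) :=
  hφ.comp (contDiff_const.prodMk contDiff_id)

/-- Partial derivative of a two-variable map in the second variable, via `inr`. -/
private lemma hasFDerivAt_partial_snd {E F : Type*} [NormedAddCommGroup E] [NormedSpace ℝ E]
    [NormedAddCommGroup F] [NormedSpace ℝ F] {Ft : ℝ × E → F} (hF : Differentiable ℝ Ft)
    (u : ℝ) (x : E) :
    HasFDerivAt (fun y => Ft (u, y)) ((fderiv ℝ Ft (u, x)).comp (ContinuousLinearMap.inr ℝ ℝ E))
      x :=
  (hF (u, x)).hasFDerivAt.comp x ((hasFDerivAt_const u x).prodMk (hasFDerivAt_id x))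

private lemma fderiv_Afl_fst
    (hφ : ContDiff ℝ 2 (fun q : ℝ × ℝ × (Fin d → ℝ) => φ q.1 q.2.1 q.2.2))
    (hflow : ∀ t s p, HasDerivAt (fun u => φ t u p) (X t (φ t s p)) s)
    (z : ℝ × (Fin d → ℝ)) :
    fderiv ℝ (Afl φ) z ((1:ℝ), (0 : Fin d → ℝ)) = X 0 (Afl φ z) := by
  have hAd := (hAfl hφ).differentiable (by norm_num)
  have h1 : HasDerivAt (fun u : ℝ => Afl φ (u, z.2))
      (fderiv ℝ (Afl φ) z ((1:ℝ), (0 : Fin d → ℝ))) z.1 :=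
    (hAd z).hasFDerivAt.comp_hasDerivAt (l := Afl φ) z.1 ((hasDerivAt_id' z.1).prodMk (hasDerivAt_const z.1 z.2))
  exact h1.unique (hflow 0 z.1 z.2)

/-- Pushforward invariance: the flow of `X 0` pushes `X 0` forward to itself. -/
private lemma invariance
    (hX : ContDiff ℝ 1 (fun q : ℝ × (Fin d → ℝ) => X q.1 q.2))
    (hφ : ContDiff ℝ 2 (fun q : ℝ × ℝ × (Fin d → ℝ) => φ q.1 q.2.1 q.2.2))
    (hφ0 : ∀ t p, φ t 0 p = p)
    (hflow : ∀ t s p, HasDerivAt (fun u => φ t u p) (X t (φ t s p)) s)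
    (u : ℝ) (x : Fin d → ℝ) :
    D2 φ u x (X 0 x) = X 0 (Afl φ (u, x)) := by
  have hA := hAfl (φ := φ) hφ
  have hAd := hA.differentiable (by norm_num)
  have hDA : ContDiff ℝ 1 (fderiv ℝ (Afl φ)) := hA.fderiv_right (by norm_num)
  have hDAd := hDA.differentiable (by norm_num)
  have hX0 : ContDiff ℝ 1 (fun y : Fin d → ℝ => X 0 y) := hX.comp (contDiff_const.prodMk contDiff_id)
  have hX0d := hX0.differentiable (by norm_num)
  set M : ℝ → (Fin d → ℝ) →L[ℝ] (Fin d → ℝ) :=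
    fun v => fderiv ℝ (fun y : Fin d → ℝ => X 0 y) (Afl φ (v, x)) with hMdef
  have hMc : Continuous M := by
    apply (hX0.continuous_fderiv (by norm_num)).comp
    exact hA.continuous.comp (continuous_id.prodMk continuous_const)
  set e : ℝ → Fin d → ℝ := fun v => D2 φ v x (X 0 x) - X 0 (Afl φ (v, x)) with hedef
  have hcurve : ∀ v : ℝ, HasDerivAt (fun w : ℝ => fderiv ℝ (Afl φ) (w, x))
      (fderiv ℝ (fderiv ℝ (Afl φ)) (v, x) (1, 0)) v := fun v =>
    (hDAd (v, x)).hasFDerivAt.comp_hasDerivAt v ((hasDerivAt_id v).prodMk (hasDerivAt_const v x))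
  have hh : ∀ v : ℝ, HasDerivAt (fun w : ℝ => D2 φ w x (X 0 x)) (M v (D2 φ v x (X 0 x))) v := by
    intro v
    have h2 := (hcurve v).clm_apply (hasDerivAt_const v (((0:ℝ), X 0 x) : ℝ × (Fin d → ℝ)))
    rw [map_zero, add_zero] at h2
    have hsym : IsSymmSndFDerivAt ℝ (Afl φ) (v, x) := hA.contDiffAt.isSymmSndFDerivAt (by simp)
    have e1 : fderiv ℝ (fderiv ℝ (Afl φ)) (v, x) (1, 0) ((0:ℝ), X 0 x)
        = fderiv ℝ (fderiv ℝ (Afl φ)) (v, x) ((0:ℝ), X 0 x) (1, 0) := hsym _ _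
    have hκ1 : HasFDerivAt
        (fun z : ℝ × (Fin d → ℝ) => fderiv ℝ (Afl φ) z ((1:ℝ), (0 : Fin d → ℝ)))
        ((fderiv ℝ (fderiv ℝ (Afl φ)) (v, x)).flip ((1:ℝ), (0 : Fin d → ℝ))) (v, x) := by
      have h3 := (hDAd (v, x)).hasFDerivAt.clm_apply
        (hasFDerivAt_const (((1:ℝ), (0 : Fin d → ℝ)) : ℝ × (Fin d → ℝ)) ((v, x) : ℝ × (Fin d → ℝ)))
      simpa using h3
    have hκ2 : HasFDerivAt (fun z : ℝ × (Fin d → ℝ) => X 0 (Afl φ z))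
        ((fderiv ℝ (fun y : Fin d → ℝ => X 0 y) (Afl φ (v, x))).comp
          (fderiv ℝ (Afl φ) (v, x))) (v, x) :=
      (hX0d _).hasFDerivAt.comp _ (hAd _).hasFDerivAt
    have hfun : (fun z : ℝ × (Fin d → ℝ) => fderiv ℝ (Afl φ) z ((1:ℝ), (0 : Fin d → ℝ)))
        = fun z => X 0 (Afl φ z) := funext fun z => fderiv_Afl_fst hφ hflow z
    rw [hfun] at hκ1
    have e2 := hκ1.unique hκ2
    have e2' := ContinuousLinearMap.ext_iff.mp e2 (((0:ℝ), X 0 x) : ℝ × (Fin d → ℝ))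
    rw [ContinuousLinearMap.flip_apply, ContinuousLinearMap.comp_apply] at e2'
    rw [e1, e2'] at h2
    have hfn2 : (fun w : ℝ => fderiv ℝ (Afl φ) (w, x) (((0:ℝ), X 0 x) : ℝ × (Fin d → ℝ)))
        = fun w => D2 φ w x (X 0 x) := funext fun w => (D2_apply φ w x (X 0 x)).symm
    rw [hfn2] at h2
    rw [D2_apply]
    exact h2
  have hk : ∀ v : ℝ, HasDerivAt (fun w : ℝ => X 0 (Afl φ (w, x))) (M v (X 0 (Afl φ (v, x)))) v := by
    intro v
    have hc : HasDerivAt (fun w : ℝ => Afl φ (w, x)) (X 0 (Afl φ (v, x))) v := hflow 0 v x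
    exact (hX0d _).hasFDerivAt.comp_hasDerivAt v hc
  have he : ∀ v, HasDerivAt e (M v (e v)) v := by
    intro v
    have h4 := (hh v).sub (hk v)
    rw [← map_sub] at h4
    exact h4
  have he0 : e 0 = 0 := by
    have hid : HasFDerivAt (fun y : Fin d → ℝ => φ 0 0 y) (D2 φ 0 x) x :=
      hasFDerivAt_partial_snd hAd 0 x
    have hid2 : HasFDerivAt (fun y : Fin d → ℝ => φ 0 0 y)
        (ContinuousLinearMap.id ℝ (Fin d → ℝ)) x := by
      have hfn : (fun y : Fin d → ℝ => φ 0 0 y) = fun y => y := funext fun y => hφ0 0 y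
      rw [hfn]; exact hasFDerivAt_id x
    have hD20 : D2 φ 0 x = ContinuousLinearMap.id ℝ (Fin d → ℝ) := hid.unique hid2
    have : Afl φ ((0:ℝ), x) = x := hφ0 0 x
    simp [hedef, hD20, this]
  have hzero := Stmt17Aux.linear_ode_zero M hMc e he he0 u
  have : D2 φ u x (X 0 x) - X 0 (Afl φ (u, x)) = 0 := hzero
  exact sub_eq_zero.mp this

/-- Group property of the time-zero flow, shifted by `-1`. -/
private lemma grp
    (hX : ContDiff ℝ 1 (fun q : ℝ × (Fin d → ℝ) => X q.1 q.2))
    (hφ : ContDiff ℝ 2 (fun q : ℝ × ℝ × (Fin d → ℝ) => φ q.1 q.2.1 q.2.2))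
    (hφ0 : ∀ t p, φ t 0 p = p)
    (hflow : ∀ t s p, HasDerivAt (fun u => φ t u p) (X t (φ t s p)) s)
    (p : Fin d → ℝ) (s : ℝ) :
    φ 0 s (φ 0 (-1) p) = φ 0 (s - 1) p := by
  have hA := hAfl (φ := φ) hφ
  have hAd := hA.differentiable (by norm_num)
  have hc : ∀ r : ℝ, HasDerivAt (fun r' : ℝ => φ 0 (r' - 1) p) (X 0 (φ 0 (r - 1) p)) r := by
    intro r
    have h2 : HasDerivAt (fun r' : ℝ => r' - 1) 1 r := (hasDerivAt_id r).sub_const 1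
    have h3 := (hflow 0 (r - 1) p).scomp r h2
    simpa [Function.comp_def] using h3
  have hη : ∀ r : ℝ, HasDerivAt (fun r' : ℝ => Afl φ (s - r', φ 0 (r' - 1) p)) 0 r := by
    intro r
    have hm : HasDerivAt (fun r' : ℝ => s - r') (-1) r := by
      simpa using (hasDerivAt_id r).const_sub s
    have hcurve := hm.prodMk (hc r)
    have h1 := (hAd ((s - r, φ 0 (r - 1) p) : ℝ × (Fin d → ℝ))).hasFDerivAt.comp_hasDerivAt r hcurve
    have hz : fderiv ℝ (Afl φ) (s - r, φ 0 (r - 1) p) ((-1:ℝ), X 0 (φ 0 (r - 1) p)) = 0 := by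
      have hsplit : (((-1:ℝ), X 0 (φ 0 (r - 1) p)) : ℝ × (Fin d → ℝ))
          = (((0:ℝ), X 0 (φ 0 (r - 1) p)) : ℝ × (Fin d → ℝ))
            - (((1:ℝ), (0 : Fin d → ℝ)) : ℝ × (Fin d → ℝ)) := by
        simp [Prod.ext_iff]
      rw [hsplit, map_sub, fderiv_Afl_fst hφ hflow]
      have hinv := invariance hX hφ hφ0 hflow (s - r) (φ 0 (r - 1) p)
      rw [D2_apply] at hinv
      rw [hinv]
      exact sub_self _
    rw [hz] at h1
    exact h1
  have hconst := is_const_of_deriv_eq_zero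
      (f := fun r' : ℝ => Afl φ (s - r', φ 0 (r' - 1) p))
      (fun r => (hη r).differentiableAt) (fun r => (hη r).deriv) 0 1
  simpa [Afl, hφ0] using hconst

end Stmt17Aux

theorem stmt_17 {d : ℕ}
    (X : ℝ → (Fin d → ℝ) → Fin d → ℝ)
    (hX : ContDiff ℝ 1 (fun q : ℝ × (Fin d → ℝ) => X q.1 q.2))
    (φ : ℝ → ℝ → (Fin d → ℝ) → Fin d → ℝ)
    (hφ : ContDiff ℝ 2 (fun q : ℝ × ℝ × (Fin d → ℝ) => φ q.1 q.2.1 q.2.2))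
    (hφ0 : ∀ t p, φ t 0 p = p)
    (hflow : ∀ t s p, HasDerivAt (fun u => φ t u p) (X t (φ t s p)) s) :
    ∀ p, HasDerivAt (fun t => φ t 1 (φ 0 (-1) p))
      (∫ s in (0:ℝ)..1,
        fderiv ℝ (φ 0 (1 - s)) (φ 0 (s - 1) p)
          (deriv (fun τ => X τ (φ 0 (s - 1) p)) 0)) 0 := by
  intro p
  have hA : ContDiff ℝ 2 (Stmt17Aux.Afl φ) := Stmt17Aux.hAfl hφ
  have hAd := hA.differentiable (by norm_num)
  have hφd := hφ.differentiable (by norm_num)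
  have hXd := hX.differentiable (by norm_num)
  set q : Fin d → ℝ := φ 0 (-1) p with hq
  set G : ℝ × ℝ → Fin d → ℝ := fun z => Stmt17Aux.Afl φ (1 - z.2, φ z.1 z.2 q) with hGdef
  have hGc : ContDiff ℝ 2 G := by
    apply hA.comp
    exact (contDiff_const.sub contDiff_snd).prodMk
      (hφ.comp (contDiff_fst.prodMk (contDiff_snd.prodMk contDiff_const)))
  have hGd := hGc.differentiable (by norm_num)
  have hDG : ContDiff ℝ 1 (fderiv ℝ G) := hGc.fderiv_right (by norm_num)
  have hDGd := hDG.differentiable (by norm_num)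
  -- the `s`-partial derivative of `G`
  have hΨ : ∀ z : ℝ × ℝ, fderiv ℝ G z ((0:ℝ), (1:ℝ))
      = Stmt17Aux.D2 φ (1 - z.2) (φ z.1 z.2 q) (X z.1 (φ z.1 z.2 q) - X 0 (φ z.1 z.2 q)) := by
    intro z
    have hy : HasDerivAt (fun s => φ z.1 s q) (X z.1 (φ z.1 z.2 q)) z.2 := hflow z.1 z.2 q
    have hm : HasDerivAt (fun s : ℝ => 1 - s) (-1) z.2 := by
      simpa using (hasDerivAt_id z.2).const_sub 1
    have hcurve := hm.prodMk hy
    have h1 := (hAd ((1 - z.2, φ z.1 z.2 q) :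
      ℝ × (Fin d → ℝ))).hasFDerivAt.comp_hasDerivAt z.2 hcurve
    have h2 : HasDerivAt (fun s : ℝ => G (z.1, s)) (fderiv ℝ G z ((0:ℝ), (1:ℝ))) z.2 :=
      (hGd z).hasFDerivAt.comp_hasDerivAt (l := G) z.2
        ((hasDerivAt_const z.2 z.1).prodMk (hasDerivAt_id' z.2))
    have h3 := h2.unique h1
    rw [h3]
    have hsplit : (((-1:ℝ), X z.1 (φ z.1 z.2 q)) : ℝ × (Fin d → ℝ))
        = (((0:ℝ), X z.1 (φ z.1 z.2 q)) : ℝ × (Fin d → ℝ)) - ((1:ℝ), (0 : Fin d → ℝ)) := by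
      simp [Prod.ext_iff]
    rw [hsplit, map_sub, Stmt17Aux.fderiv_Afl_fst hφ hflow, Stmt17Aux.D2_apply]
    have hsub : (((0:ℝ), X z.1 (φ z.1 z.2 q) - X 0 (φ z.1 z.2 q)) : ℝ × (Fin d → ℝ))
        = (((0:ℝ), X z.1 (φ z.1 z.2 q)) : ℝ × (Fin d → ℝ)) - ((0:ℝ), X 0 (φ z.1 z.2 q)) := by
      simp [Prod.ext_iff]
    rw [hsub, map_sub]
    have hinv := Stmt17Aux.invariance hX hφ hφ0 hflow (1 - z.2) (φ z.1 z.2 q)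
    rw [Stmt17Aux.D2_apply] at hinv
    rw [hinv]
  set w : ℝ → Fin d → ℝ := fun s => fderiv ℝ G (0, s) ((1:ℝ), (0:ℝ)) with hwdef
  set c : ℝ → Fin d → ℝ := fun s => φ 0 (s - 1) p with hcdef
  have hgrp : ∀ s : ℝ, φ 0 s q = c s := fun s => Stmt17Aux.grp hX hφ hφ0 hflow p s
  set XD : (Fin d → ℝ) → Fin d → ℝ := fun y =>
    fderiv ℝ (fun q' : ℝ × (Fin d → ℝ) => X q'.1 q'.2) (0, y) ((1:ℝ), (0 : Fin d → ℝ))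
    with hXDdef
  have hw : ∀ s : ℝ, HasDerivAt w (Stmt17Aux.D2 φ (1 - s) (c s) (XD (c s))) s := by
    intro s
    have ha : HasDerivAt (fun s' : ℝ => fderiv ℝ G (0, s'))
        (fderiv ℝ (fderiv ℝ G) (0, s) ((0:ℝ), (1:ℝ))) s :=
      (hDGd (0, s)).hasFDerivAt.comp_hasDerivAt s
        ((hasDerivAt_const s (0:ℝ)).prodMk (hasDerivAt_id s))
    have hb := ha.clm_apply (hasDerivAt_const s (((1:ℝ), (0:ℝ)) : ℝ × ℝ))
    rw [map_zero, add_zero] at hb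
    have hsym : IsSymmSndFDerivAt ℝ G (0, s) := hGc.contDiffAt.isSymmSndFDerivAt (by simp)
    have e1 : fderiv ℝ (fderiv ℝ G) (0, s) ((0:ℝ), (1:ℝ)) ((1:ℝ), (0:ℝ))
        = fderiv ℝ (fderiv ℝ G) (0, s) ((1:ℝ), (0:ℝ)) ((0:ℝ), (1:ℝ)) := hsym _ _
    have hd1 : HasDerivAt (fun t : ℝ => fderiv ℝ G (t, s))
        (fderiv ℝ (fderiv ℝ G) (0, s) ((1:ℝ), (0:ℝ))) 0 :=
      (hDGd (0, s)).hasFDerivAt.comp_hasDerivAt 0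
        ((hasDerivAt_id 0).prodMk (hasDerivAt_const 0 s))
    have hd2 := hd1.clm_apply (hasDerivAt_const 0 (((0:ℝ), (1:ℝ)) : ℝ × ℝ))
    rw [map_zero, add_zero] at hd2
    have hfun : (fun t : ℝ => fderiv ℝ G (t, s) ((0:ℝ), (1:ℝ)))
        = fun t => Stmt17Aux.D2 φ (1 - s) (φ t s q) (X t (φ t s q) - X 0 (φ t s q)) :=
      funext fun t => hΨ (t, s)
    rw [hfun] at hd2
    have hyd : HasDerivAt (fun t : ℝ => φ t s q)
        (fderiv ℝ (fun q' : ℝ × ℝ × (Fin d → ℝ) => φ q'.1 q'.2.1 q'.2.2) (0, s, q)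
          ((1:ℝ), (0:ℝ), (0 : Fin d → ℝ))) 0 :=
      (hφd (0, s, q)).hasFDerivAt.comp_hasDerivAt
        (l := fun q' : ℝ × ℝ × (Fin d → ℝ) => φ q'.1 q'.2.1 q'.2.2) 0
        ((hasDerivAt_id' (0:ℝ)).prodMk (hasDerivAt_const 0 ((s, q) : ℝ × (Fin d → ℝ))))
    set v : Fin d → ℝ := fderiv ℝ (fun q' : ℝ × ℝ × (Fin d → ℝ) => φ q'.1 q'.2.1 q'.2.2)
      (0, s, q) ((1:ℝ), (0:ℝ), (0 : Fin d → ℝ)) with hvdef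
    have hBd : DifferentiableAt ℝ (fun t : ℝ => Stmt17Aux.D2 φ (1 - s) (φ t s q)) 0 := by
      have hDA : ContDiff ℝ 1 (fderiv ℝ (Stmt17Aux.Afl φ)) := hA.fderiv_right (by norm_num)
      have h5 : DifferentiableAt ℝ
          (fun t : ℝ => fderiv ℝ (Stmt17Aux.Afl φ) (1 - s, φ t s q)) 0 :=
        ((hDA.differentiable (by norm_num)) _).comp 0
          ((differentiableAt_const _).prodMk hyd.differentiableAt)
      exact h5.clm_comp (differentiableAt_const _)
    obtain ⟨B', hB'⟩ : ∃ B', HasDerivAt (fun t : ℝ => Stmt17Aux.D2 φ (1 - s) (φ t s q)) B' 0 :=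
      ⟨_, hBd.hasDerivAt⟩
    have hR1 : HasDerivAt (fun t : ℝ => X t (φ t s q))
        (fderiv ℝ (fun q' : ℝ × (Fin d → ℝ) => X q'.1 q'.2) (0, φ 0 s q) ((1:ℝ), v)) 0 :=
      (hXd (0, φ 0 s q)).hasFDerivAt.comp_hasDerivAt 0 ((hasDerivAt_id 0).prodMk hyd)
    have hR2 : HasDerivAt (fun t : ℝ => X 0 (φ t s q))
        (fderiv ℝ (fun q' : ℝ × (Fin d → ℝ) => X q'.1 q'.2) (0, φ 0 s q) ((0:ℝ), v)) 0 := by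
      have h6 := (Stmt17Aux.hasFDerivAt_partial_snd
        (Ft := fun q' : ℝ × (Fin d → ℝ) => X q'.1 q'.2) hXd 0 (φ 0 s q)).comp_hasDerivAt 0 hyd
      simpa [Function.comp_def] using h6
    have hR := hR1.sub hR2
    have hRcomb : fderiv ℝ (fun q' : ℝ × (Fin d → ℝ) => X q'.1 q'.2) (0, φ 0 s q) ((1:ℝ), v)
        - fderiv ℝ (fun q' : ℝ × (Fin d → ℝ) => X q'.1 q'.2) (0, φ 0 s q) ((0:ℝ), v)
        = XD (φ 0 s q) := by
      rw [← map_sub]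
      rw [hXDdef]
      congr 1
      simp [Prod.ext_iff]
    rw [hRcomb] at hR
    have hfull := hB'.clm_apply hR
    have e2 := hd2.unique hfull
    rw [e1, e2] at hb
    simpa [hgrp s] using hb
  have hccont : Continuous c := by
    have h0 : Continuous fun s : ℝ => Stmt17Aux.Afl φ (s - 1, p) :=
      hA.continuous.comp ((continuous_id.sub continuous_const).prodMk continuous_const)
    exact h0
  have hD2cont : Continuous fun s : ℝ => Stmt17Aux.D2 φ (1 - s) (c s) := by
    have h1 : Continuous fun s : ℝ => fderiv ℝ (Stmt17Aux.Afl φ) (1 - s, c s) :=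
      (hA.continuous_fderiv (by norm_num)).comp
        ((continuous_const.sub continuous_id).prodMk hccont)
    exact h1.clm_comp continuous_const
  have hXDcont : Continuous fun s : ℝ => XD (c s) := by
    have h1 : Continuous fun s : ℝ =>
        fderiv ℝ (fun q' : ℝ × (Fin d → ℝ) => X q'.1 q'.2) (0, c s) :=
      (hX.continuous_fderiv (by norm_num)).comp (continuous_const.prodMk hccont)
    exact h1.clm_apply continuous_const
  have hIcont : Continuous fun s : ℝ => Stmt17Aux.D2 φ (1 - s) (c s) (XD (c s)) :=
    hD2cont.clm_apply hXDcont
  have hFTC := intervalIntegral.integral_eq_sub_of_hasDerivAt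
      (f := w) (f' := fun s => Stmt17Aux.D2 φ (1 - s) (c s) (XD (c s)))
      (fun s _ => hw s) (hIcont.intervalIntegrable 0 1)
  have hw0 : w 0 = 0 := by
    have h1 := HasFDerivAt.comp_hasDerivAt (f := fun t : ℝ => ((t : ℝ), (0:ℝ))) 0
        (hGd ((0:ℝ), (0:ℝ))).hasFDerivAt
        ((hasDerivAt_id (0:ℝ)).prodMk (hasDerivAt_const (0:ℝ) (0:ℝ)))
    simp only [Function.comp_def, id_eq] at h1
    have h2 : (fun t : ℝ => G ((t : ℝ), (0:ℝ))) = fun _ : ℝ => Stmt17Aux.Afl φ (1, q) := by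
      funext t
      show Stmt17Aux.Afl φ (1 - 0, φ t 0 q) = Stmt17Aux.Afl φ (1, q)
      rw [hφ0, sub_zero]
    rw [h2] at h1
    exact h1.unique (hasDerivAt_const 0 _)
  have hfin : HasDerivAt (fun t : ℝ => φ t 1 q) (w 1) 0 := by
    have h1 := HasFDerivAt.comp_hasDerivAt (f := fun t : ℝ => ((t : ℝ), (1:ℝ))) 0
        (hGd ((0:ℝ), (1:ℝ))).hasFDerivAt
        ((hasDerivAt_id (0:ℝ)).prodMk (hasDerivAt_const (0:ℝ) (1:ℝ)))
    simp only [Function.comp_def, id_eq] at h1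
    have h2 : (fun t : ℝ => G ((t : ℝ), (1:ℝ))) = fun t : ℝ => φ t 1 q := by
      funext t
      show Stmt17Aux.Afl φ (1 - 1, φ t 1 q) = φ t 1 q
      rw [sub_self]
      exact hφ0 0 (φ t 1 q)
    rw [h2] at h1
    exact h1
  have hint_eq : (∫ s in (0:ℝ)..1,
        fderiv ℝ (φ 0 (1 - s)) (φ 0 (s - 1) p)
          (deriv (fun τ => X τ (φ 0 (s - 1) p)) 0))
      = ∫ s in (0:ℝ)..1, Stmt17Aux.D2 φ (1 - s) (c s) (XD (c s)) := by
    apply intervalIntegral.integral_congr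
    intro s _
    simp only [hcdef, hXDdef]
    have e1 : fderiv ℝ (φ 0 (1 - s)) (φ 0 (s - 1) p)
        = Stmt17Aux.D2 φ (1 - s) (φ 0 (s - 1) p) :=
      (Stmt17Aux.hasFDerivAt_partial_snd (Ft := Stmt17Aux.Afl φ) hAd (1 - s)
        (φ 0 (s - 1) p)).fderiv
    have e2 : deriv (fun τ => X τ (φ 0 (s - 1) p)) 0
        = fderiv ℝ (fun q' : ℝ × (Fin d → ℝ) => X q'.1 q'.2) (0, φ 0 (s - 1) p)
          ((1:ℝ), (0 : Fin d → ℝ)) := by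
      have h7 : HasDerivAt (fun τ => X τ (φ 0 (s - 1) p))
          (fderiv ℝ (fun q' : ℝ × (Fin d → ℝ) => X q'.1 q'.2) (0, φ 0 (s - 1) p)
            ((1:ℝ), (0 : Fin d → ℝ))) 0 :=
        (hXd (0, φ 0 (s - 1) p)).hasFDerivAt.comp_hasDerivAt
          (l := fun q' : ℝ × (Fin d → ℝ) => X q'.1 q'.2) 0
          ((hasDerivAt_id' (0:ℝ)).prodMk (hasDerivAt_const 0 (φ 0 (s - 1) p)))
      exact h7.deriv
    rw [e1, e2]
  rw [hint_eq, hFTC, hw0, sub_zero]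
  exact hfin
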